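/- Let $F$ be a finite field with $q$ elements, $n \geq 1$, $1 \leq r \leq n$. The number of $n \times n$ matrices $X$ over $F$ with $\mathrm{rank}(X) = r$ and $(1,1)$-entry equal to $0$ is $q^{-1}|M(n,n,r,q)| + (q^r - q^{r-1})|M(n-1,n-1,r,q)| + (q^{r-2} - q^{r-1})|M(n-1,n-1,r-1,q)|$, where $|M(n,m,r,q)|$ denotes the number of $n \times m$ matrices of rank $r$ over $F$. -/

import Mathlib

open Matrix

open Module Submodule

variable {F : Type} [Field F] [Fintype F]

theorem rank_cons_mem {m n : ℕ} (Y : Matrix (Fin m) (Fin n) F) (x : Fin n → F)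
    (h : x ∈ span F (Set.range Y)) : (Matrix.of (Fin.cons x Y)).rank = Y.rank := by
  rw [Matrix.rank_eq_finrank_span_row, Matrix.rank_eq_finrank_span_row]
  have hs : span F (Set.range (Matrix.of (Fin.cons x Y))) = span F (Set.range Y) := by
    show span F (Set.range (Fin.cons x Y)) = span F (Set.range Y)
    exact (congrArg (span F) (Fin.range_cons x Y)).trans (Submodule.span_insert_eq_span h)
  rw [Matrix.row, Matrix.row, hs]

theorem rank_cons_not_mem {m n : ℕ} (Y : Matrix (Fin m) (Fin n) F) (x : Fin n → F)
    (h : x ∉ span F (Set.range Y)) : (Matrix.of (Fin.cons x Y)).rank = Y.rank + 1 := by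
  rw [Matrix.rank_eq_finrank_span_row, Matrix.rank_eq_finrank_span_row]
  have hs : span F (Set.range (Matrix.of (Fin.cons x Y)))
      = (F ∙ x) ⊔ span F (Set.range Y) := by
    show span F (Set.range (Fin.cons x Y)) = _
    exact (congrArg (span F) (Fin.range_cons x Y)).trans (Submodule.span_insert _ _)
  rw [Matrix.row, Matrix.row, hs]
  have hx0 : x ≠ 0 := fun h0 => h (h0 ▸ (span F (Set.range Y)).zero_mem)
  have hdisj : (F ∙ x) ⊓ span F (Set.range Y) = ⊥ := by
    rw [eq_bot_iff]
    rintro y ⟨hy1, hy2⟩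
    obtain ⟨c, rfl⟩ := Submodule.mem_span_singleton.mp hy1
    rcases eq_or_ne c 0 with rfl | hc
    · simpa using (smul_eq_zero_of_left rfl x : (0:F) • x = 0) ▸ Submodule.zero_mem ⊥
    · exact absurd (by simpa [hc] using (span F (Set.range Y)).smul_mem c⁻¹ hy2) h
  have := Submodule.finrank_sup_add_finrank_inf_eq (F ∙ x) (span F (Set.range Y))
  rw [hdisj, finrank_bot, finrank_span_singleton hx0] at this
  omega

variable (F : Type) [Field F] [Fintype F]

noncomputable def cnt (k l r : ℕ) : ℕ :=
  Nat.card {X : Matrix (Fin k) (Fin l) F // X.rank = r}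

variable {F}

theorem card_mem_span {n : ℕ} (m : ℕ) (Y : Matrix (Fin m) (Fin n) F) :
    Nat.card {x : Fin n → F // x ∈ span F (Set.range Y)} =
      Fintype.card F ^ Y.rank := by
  classical
  rw [Y.rank_eq_finrank_span_row, Nat.card_eq_fintype_card]
  exact card_eq_pow_finrank

theorem card_not_mem_span {n : ℕ} (m : ℕ) (Y : Matrix (Fin m) (Fin n) F) :
    Nat.card {x : Fin n → F // x ∉ span F (Set.range Y)} =
      Fintype.card F ^ n - Fintype.card F ^ Y.rank := by
  classical
  have h1 := card_mem_span m Y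
  rw [Nat.card_eq_fintype_card] at h1 ⊢
  rw [Fintype.card_subtype_compl, h1]
  congr 1
  simp


def eKey (m n r : ℕ) : {X : Matrix (Fin (m+1)) (Fin n) F // X.rank = r} ≃
    Σ Y : Matrix (Fin m) (Fin n) F, {x : Fin n → F // (Matrix.of (Fin.cons x Y)).rank = r} where
  toFun X := ⟨Matrix.of (Fin.tail (X.1 : Fin (m+1) → Fin n → F)), (X.1 : Fin (m+1) → Fin n → F) 0, by
      have h : Matrix.of (Fin.cons ((X.1 : Fin (m+1) → Fin n → F) 0)
          (Matrix.of (Fin.tail (X.1 : Fin (m+1) → Fin n → F)))) = X.1 :=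
        congrArg Matrix.of (Fin.cons_self_tail _)
      rw [h]; exact X.2⟩
  invFun p := ⟨Matrix.of (Fin.cons p.2.1 p.1), p.2.2⟩
  left_inv X := Subtype.ext (congrArg Matrix.of (Fin.cons_self_tail _))
  right_inv p := rfl

theorem cnt_succ_row {m n : ℕ} (r : ℕ) (hr : 1 ≤ r) :
    cnt F (m+1) n r = Fintype.card F ^ r * cnt F m n r
      + (Fintype.card F ^ n - Fintype.card F ^ (r-1)) * cnt F m n (r-1) := by
  classical
  set q := Fintype.card F with hq
  have key : cnt F (m+1) n r
      = Nat.card (Σ Y : Matrix (Fin m) (Fin n) F,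
          {x : Fin n → F // (Matrix.of (Fin.cons x Y)).rank = r}) :=
    Nat.card_congr (eKey m n r)
  rw [key, Nat.card_eq_fintype_card, Fintype.card_sigma]
  have fib : ∀ Y : Matrix (Fin m) (Fin n) F,
      Fintype.card {x : Fin n → F // (Matrix.of (Fin.cons x Y)).rank = r}
        = (if Y.rank = r then q^r else 0) + (if Y.rank = r-1 then q^n - q^(r-1) else 0) := by
    intro Y
    by_cases hY : Y.rank = r
    · have hne : ¬ (Y.rank = r - 1) := by omega
      rw [if_pos hY, if_neg hne, add_zero]
      have hiff : ∀ x : Fin n → F,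
          (Matrix.of (Fin.cons x Y)).rank = r ↔ x ∈ span F (Set.range Y) := by
        intro x
        constructor
        · intro hx
          by_contra hmem
          rw [rank_cons_not_mem _ _ hmem] at hx
          omega
        · intro hmem
          rw [rank_cons_mem _ _ hmem, hY]
      rw [Fintype.card_congr (Equiv.subtypeEquivRight hiff), ← Nat.card_eq_fintype_card,
        card_mem_span, hY]
    · by_cases hY' : Y.rank = r - 1
      · rw [if_neg hY, if_pos hY', zero_add]
        have hiff : ∀ x : Fin n → F,
            (Matrix.of (Fin.cons x Y)).rank = r ↔ x ∉ span F (Set.range Y) := by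
          intro x
          constructor
          · intro hx hmem
            rw [rank_cons_mem _ _ hmem] at hx
            omega
          · intro hmem
            rw [rank_cons_not_mem _ _ hmem, hY']
            omega
        rw [Fintype.card_congr (Equiv.subtypeEquivRight hiff), ← Nat.card_eq_fintype_card,
          card_not_mem_span, hY']
      · rw [if_neg hY, if_neg hY', add_zero]
        rw [Fintype.card_eq_zero_iff]
        refine ⟨fun x => ?_⟩
        obtain ⟨v, hv⟩ := x
        by_cases hmem : (v : Fin n → F) ∈ span F (Set.range Y)
        · rw [rank_cons_mem _ _ hmem] at hv; exact hY hv
        · rw [rank_cons_not_mem _ _ hmem] at hv; omega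
  simp only [fib]
  rw [Finset.sum_add_distrib]
  have hc1 : ∀ (s : ℕ) (c : ℕ), (∑ Y : Matrix (Fin m) (Fin n) F,
      (if Y.rank = s then c else 0)) = c * cnt F m n s := by
    intro s c
    rw [← Finset.sum_filter]
    rw [Finset.sum_const, smul_eq_mul, mul_comm]
    congr 1
    rw [cnt, Nat.card_eq_fintype_card, Fintype.card_subtype]
  rw [hc1, hc1]

theorem rank_zero_rows {n : ℕ} (X : Matrix (Fin 0) (Fin n) F) : X.rank = 0 := by
  rw [X.rank_eq_finrank_span_row]
  have : Set.range X = ∅ := Set.range_eq_empty _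
  rw [Matrix.row, this, Submodule.span_empty, finrank_bot]

theorem matrix_rank_eq_zero_iff {k n : ℕ} (X : Matrix (Fin k) (Fin n) F) :
    X.rank = 0 ↔ X = 0 := by
  rw [X.rank_eq_finrank_span_row]
  rw [Submodule.finrank_eq_zero]
  rw [Submodule.span_eq_bot]
  constructor
  · intro h
    ext i j
    have := h (X i) ⟨i, rfl⟩
    simp [congrFun this j]
  · rintro rfl
    rintro x ⟨i, rfl⟩
    rfl

theorem cnt_zero_rows_rank_zero (n : ℕ) : cnt F 0 n 0 = 1 := by
  rw [cnt]
  have e : {X : Matrix (Fin 0) (Fin n) F // X.rank = 0} ≃ Matrix (Fin 0) (Fin n) F :=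
    Equiv.subtypeUnivEquiv rank_zero_rows
  rw [Nat.card_congr e]
  simp [Nat.card_eq_fintype_card]
  exact (Fintype.card_fun (α := Fin 0) (β := Fin n → F)).trans (by simp)

theorem cnt_zero_rows_pos (n r : ℕ) (hr : 1 ≤ r) : cnt F 0 n r = 0 := by
  rw [cnt]
  have : IsEmpty {X : Matrix (Fin 0) (Fin n) F // X.rank = r} := by
    refine ⟨fun X => ?_⟩
    have := rank_zero_rows X.1
    have h2 := X.2
    omega
  simp [Nat.card_of_isEmpty]

theorem cnt_rank_zero (k n : ℕ) : cnt F k n 0 = 1 := by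
  classical
  rw [cnt]
  have e : {X : Matrix (Fin k) (Fin n) F // X.rank = 0} ≃ {X : Matrix (Fin k) (Fin n) F // X = 0} :=
    Equiv.subtypeEquivRight fun X => matrix_rank_eq_zero_iff X
  rw [Nat.card_congr e, Nat.card_eq_fintype_card, Fintype.card_subtype_eq]

theorem cnt_gt_width (k n r : ℕ) (h : n < r) : cnt F k n r = 0 := by
  rw [cnt]
  have : IsEmpty {X : Matrix (Fin k) (Fin n) F // X.rank = r} := by
    refine ⟨fun X => ?_⟩
    have h1 : X.1.rank ≤ n := by
      simpa using X.1.rank_le_card_width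
    have h2 := X.2
    omega
  simp [Nat.card_of_isEmpty]

/-! ### the product formulas -/

noncomputable def Aq (q : ℚ) (k r : ℕ) : ℚ := ∏ j ∈ Finset.range r, (q^k - q^j)

noncomputable def Cq (q : ℚ) (r : ℕ) : ℚ := ∏ j ∈ Finset.range r, (q^r - q^j)

theorem Aq_zero (q : ℚ) (k : ℕ) : Aq q k 0 = 1 := by simp [Aq]

theorem Cq_zero (q : ℚ) : Cq q 0 = 1 := by simp [Cq]

theorem Aq_succ (q : ℚ) (k r : ℕ) : Aq q k (r+1) = Aq q k r * (q^k - q^r) :=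
  Finset.prod_range_succ _ _

theorem prod_shift (q : ℚ) (t r : ℕ) :
    ∏ j ∈ Finset.range r, (q^(t+1) - q^(j+1)) = q^r * ∏ j ∈ Finset.range r, (q^t - q^j) := by
  have h : ∀ j ∈ Finset.range r, q^(t+1) - q^(j+1) = q * (q^t - q^j) := by
    intros j hj; ring
  rw [Finset.prod_congr rfl h, Finset.prod_mul_distrib, Finset.prod_const, Finset.card_range]

theorem Aq_pascal (q : ℚ) (k r : ℕ) :
    Aq q (k+1) (r+1) = q^(r+1) * Aq q k (r+1) + (q^(r+1) - 1) * q^r * Aq q k r := by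
  have h1 : (q:ℚ)^(r+1) * Aq q k (r+1) = ∏ j ∈ Finset.range (r+1), (q^(k+1) - q^(j+1)) := by
    rw [Aq]; exact (prod_shift q k (r+1)).symm
  have h2 : Aq q (k+1) (r+1)
      = (q^(k+1) - 1) * ∏ j ∈ Finset.range r, (q^(k+1) - q^(j+1)) := by
    rw [Aq, Finset.prod_range_succ']
    rw [mul_comm]
    norm_num
  have h3 : ∏ j ∈ Finset.range (r+1), (q^(k+1) - q^(j+1))
      = (∏ j ∈ Finset.range r, (q^(k+1) - q^(j+1))) * (q^(k+1) - q^(r+1)) :=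
    Finset.prod_range_succ _ _
  have h4 : ∏ j ∈ Finset.range r, (q^(k+1) - q^(j+1)) = q^r * Aq q k r := prod_shift q k r
  have e1 : (q:ℚ)^(r+1) * Aq q k (r+1) = (q^r * Aq q k r) * (q^(k+1) - q^(r+1)) := by
    rw [h1, h3, h4]
  rw [h2, h4]
  linear_combination -e1

theorem Cq_succ (q : ℚ) (r : ℕ) : Cq q (r+1) = (q^(r+1) - 1) * q^r * Cq q r := by
  have h2 : Cq q (r+1) = (q^(r+1) - 1) * ∏ j ∈ Finset.range r, (q^(r+1) - q^(j+1)) := by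
    rw [Cq, Finset.prod_range_succ']
    rw [mul_comm]
    norm_num
  rw [h2, prod_shift]
  rw [Cq]
  ring

theorem Cq_ne_zero {q : ℚ} (hq : 1 < q) (r : ℕ) : Cq q r ≠ 0 := by
  rw [Cq]
  rw [Finset.prod_ne_zero_iff]
  intro j hj
  rw [Finset.mem_range] at hj
  exact sub_ne_zero.mpr (ne_of_gt (pow_lt_pow_right₀ hq hj))

theorem Aq_pos_ne_zero_factor {q : ℚ} (hq : 1 < q) (r : ℕ) :
    (q^(r+1) - 1 : ℚ) ≠ 0 :=
  sub_ne_zero.mpr (ne_of_gt (one_lt_pow₀ hq (Nat.succ_ne_zero r)))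

/-- ℚ-valued recurrence -/
theorem cnt_succ_row_q {m n : ℕ} (r : ℕ) (hr : 1 ≤ r) :
    (cnt F (m+1) n r : ℚ) = (Fintype.card F : ℚ)^r * cnt F m n r
      + ((Fintype.card F : ℚ)^n - (Fintype.card F : ℚ)^(r-1)) * cnt F m n (r-1) := by
  by_cases hn : r - 1 ≤ n
  · rw [cnt_succ_row r hr]
    push_cast [Nat.sub_le_iff_le_add, pow_le_pow_right₀ (Nat.one_le_iff_ne_zero.mpr
      Fintype.card_ne_zero : 1 ≤ Fintype.card F) hn]
    ring
  · have h1 : cnt F (m+1) n r = 0 := cnt_gt_width _ _ _ (by omega)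
    have h2 : cnt F m n r = 0 := cnt_gt_width _ _ _ (by omega)
    have h3 : cnt F m n (r-1) = 0 := cnt_gt_width _ _ _ (by omega)
    rw [h1, h2, h3]
    norm_num

theorem cnt_closed (m : ℕ) : ∀ n r : ℕ,
    (cnt F m n r : ℚ) = Aq (Fintype.card F) m r * Aq (Fintype.card F) n r
      / Cq (Fintype.card F) r := by
  induction m with
  | zero =>
    intro n r
    match r with
    | 0 => rw [cnt_zero_rows_rank_zero]; simp [Aq_zero, Cq_zero]
    | (s+1) =>
      rw [cnt_zero_rows_pos n (s+1) (by omega)]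
      have h0 : Aq (Fintype.card F : ℚ) 0 (s+1) = 0 := by
        rw [Aq]
        refine Finset.prod_eq_zero (Finset.mem_range.mpr (Nat.succ_pos s)) ?_
        norm_num
      rw [h0]
      norm_num
  | succ m ih =>
    intro n r
    have hq : (1:ℚ) < (Fintype.card F : ℚ) := by
      exact_mod_cast Fintype.one_lt_card
    set q : ℚ := (Fintype.card F : ℚ) with hqd
    match r with
    | 0 => rw [cnt_rank_zero]; simp [Aq_zero, Cq_zero]
    | (s+1) =>
      rw [cnt_succ_row_q (s+1) (by omega)]
      simp only [Nat.add_sub_cancel]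
      rw [ih n (s+1), ih n s]
      rw [Aq_pascal, Cq_succ, Aq_succ q n s, Aq_succ q m s]
      have hC := Cq_ne_zero hq s
      have hE := Aq_pos_ne_zero_factor hq s
      have hq0 : q ≠ 0 := by positivity
      field_simp
      ring

/-! ### rank of bordered block matrices -/

def prodSubmoduleEquiv {V W : Type*} [AddCommGroup V] [AddCommGroup W]
    [Module F V] [Module F W] (p : Submodule F V) (q : Submodule F W) :
    ↥(p.prod q) ≃ₗ[F] ↥p × ↥q where
  toFun x := (⟨x.1.1, x.2.1⟩, ⟨x.1.2, x.2.2⟩)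
  map_add' x y := rfl
  map_smul' c x := rfl
  invFun y := ⟨(y.1.1, y.2.1), ⟨y.1.2, y.2.2⟩⟩
  left_inv x := rfl
  right_inv y := rfl

theorem finrank_submodule_prod {V W : Type*} [AddCommGroup V] [AddCommGroup W]
    [Module F V] [Module F W] [FiniteDimensional F V] [FiniteDimensional F W]
    (p : Submodule F V) (q : Submodule F W) :
    finrank F ↥(p.prod q) = finrank F ↥p + finrank F ↥q := by
  rw [LinearEquiv.finrank_eq (prodSubmoduleEquiv p q)]
  exact Module.finrank_prod

theorem range_prodMap' {V W V' W' : Type*} [AddCommGroup V] [AddCommGroup W]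
    [AddCommGroup V'] [AddCommGroup W'] [Module F V] [Module F W] [Module F V'] [Module F W']
    (f : V →ₗ[F] V') (g : W →ₗ[F] W') :
    LinearMap.range (f.prodMap g) = (LinearMap.range f).prod (LinearMap.range g) := by
  ext x
  simp only [LinearMap.mem_range, Submodule.mem_prod]
  constructor
  · rintro ⟨⟨a, b⟩, rfl⟩
    exact ⟨⟨a, rfl⟩, ⟨b, rfl⟩⟩
  · rintro ⟨⟨a, ha⟩, ⟨b, hb⟩⟩
    exact ⟨(a, b), by simp [ha, hb]⟩

theorem rank_fromBlocks_diag {m : ℕ} (E : Matrix (Fin m) (Fin m) F) :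
    (fromBlocks (1 : Matrix (Fin 1) (Fin 1) F) 0 0 E).rank = E.rank + 1 := by
  classical
  set e := (LinearEquiv.sumArrowLequivProdArrow (Fin 1) (Fin m) F F)
  have hmv : (fromBlocks (1 : Matrix (Fin 1) (Fin 1) F) 0 0 E).mulVecLin
      = e.symm.toLinearMap ∘ₗ ((LinearMap.id.prodMap E.mulVecLin) ∘ₗ e.toLinearMap) := by
    apply LinearMap.ext
    intro v
    have hv : v = Sum.elim (v ∘ Sum.inl) (v ∘ Sum.inr) := by
      funext u; cases u <;> rfl
    show (fromBlocks (1 : Matrix (Fin 1) (Fin 1) F) 0 0 E).mulVec v = _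
    conv_lhs => rw [hv]
    rw [fromBlocks_mulVec]
    simp only [one_mulVec, zero_mulVec, add_zero, zero_add]
    funext u
    cases u with
    | inl a =>
      simp [e, LinearEquiv.sumArrowLequivProdArrow, Equiv.sumArrowEquivProdArrow]
    | inr b =>
      simp [e, LinearEquiv.sumArrowLequivProdArrow, Equiv.sumArrowEquivProdArrow]
  rw [Matrix.rank, hmv]
  rw [LinearMap.range_comp]
  rw [LinearMap.range_comp_of_range_eq_top _ (LinearEquiv.range e)]
  rw [LinearEquiv.finrank_map_eq]
  rw [range_prodMap']
  rw [finrank_submodule_prod]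
  rw [LinearMap.range_id, finrank_top]
  have : finrank F (Fin 1 → F) = 1 := by simp
  rw [this]
  rw [Matrix.rank]
  ring

theorem rank_fromBlocks_one {m : ℕ} (B : Matrix (Fin 1) (Fin m) F)
    (C : Matrix (Fin m) (Fin 1) F) (D : Matrix (Fin m) (Fin m) F) :
    (fromBlocks (1 : Matrix (Fin 1) (Fin 1) F) B C D).rank = (D - C * B).rank + 1 := by
  classical
  haveI : Invertible (1 : Matrix (Fin 1) (Fin 1) F) := invertibleOne
  have h := Matrix.fromBlocks_eq_of_invertible₁₁ (1 : Matrix (Fin 1) (Fin 1) F) B C D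
  have hV : IsUnit (fromBlocks (1 : Matrix (Fin 1) (Fin 1) F) (⅟(1 : Matrix (Fin 1) (Fin 1) F) * B) 0 1).det := by
    rw [Matrix.det_fromBlocks_zero₂₁]
    simp
  have hU : IsUnit (fromBlocks (1 : Matrix (Fin 1) (Fin 1) F) 0 (C * ⅟(1 : Matrix (Fin 1) (Fin 1) F)) 1).det := by
    rw [Matrix.det_fromBlocks_zero₁₂]
    simp
  rw [h]
  rw [Matrix.rank_mul_eq_left_of_isUnit_det _ _ hV]
  rw [Matrix.rank_mul_eq_right_of_isUnit_det _ _ hU]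
  simp only [invOf_one, Matrix.mul_one, Matrix.one_mul]
  rw [rank_fromBlocks_diag]

def eBlock (m r : ℕ) (hr : 1 ≤ r) :
    {W : Matrix (Fin 1 ⊕ Fin m) (Fin 1 ⊕ Fin m) F // W.rank = r ∧ W.toBlocks₁₁ = 1} ≃
    (Matrix (Fin 1) (Fin m) F × Matrix (Fin m) (Fin 1) F ×
      {D : Matrix (Fin m) (Fin m) F // D.rank = r - 1}) where
  toFun W := (W.1.toBlocks₁₂, W.1.toBlocks₂₁,
    ⟨W.1.toBlocks₂₂ - W.1.toBlocks₂₁ * W.1.toBlocks₁₂, by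
      obtain ⟨hrk, h11⟩ := W.2
      have hW : (W.1) = fromBlocks 1 W.1.toBlocks₁₂ W.1.toBlocks₂₁ W.1.toBlocks₂₂ := by
        conv_lhs => rw [← fromBlocks_toBlocks W.1]
        rw [h11]
      rw [hW, rank_fromBlocks_one] at hrk
      omega⟩)
  invFun p := ⟨fromBlocks 1 p.1 p.2.1 (p.2.2.1 + p.2.1 * p.1), by
      constructor
      · rw [rank_fromBlocks_one]
        rw [add_sub_cancel_right]
        rw [p.2.2.2]
        omega
      · rfl⟩
  left_inv W := by
    apply Subtype.ext
    show fromBlocks 1 W.1.toBlocks₁₂ W.1.toBlocks₂₁ _ = W.1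
    rw [sub_add_cancel]
    conv_rhs => rw [← fromBlocks_toBlocks W.1, W.2.2]
  right_inv p := by
    rcases p with ⟨B, C, D, hD⟩
    simp only [toBlocks_fromBlocks₁₂, toBlocks_fromBlocks₂₁, toBlocks_fromBlocks₂₂]
    refine Prod.ext rfl (Prod.ext rfl (Subtype.ext ?_))
    simp

theorem card_entry_one {m : ℕ} (r : ℕ) (hr : 1 ≤ r) :
    Nat.card {W : Matrix (Fin 1 ⊕ Fin m) (Fin 1 ⊕ Fin m) F // W.rank = r ∧ W.toBlocks₁₁ = 1}
      = Fintype.card F ^ m * (Fintype.card F ^ m * cnt F m m (r-1)) := by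
  classical
  rw [Nat.card_congr (eBlock m r hr)]
  rw [Nat.card_prod, Nat.card_prod]
  have c1 : Nat.card (Matrix (Fin 1) (Fin m) F) = Fintype.card F ^ m := by
    have h : Nat.card (Fin 1 → Fin m → F) = Fintype.card F ^ m := by
      simp [Nat.card_fun, Nat.card_eq_fintype_card]
    exact h
  have c2 : Nat.card (Matrix (Fin m) (Fin 1) F) = Fintype.card F ^ m := by
    have h : Nat.card (Fin m → Fin 1 → F) = Fintype.card F ^ m := by
      simp [Nat.card_fun, Nat.card_eq_fintype_card]
    exact h
  rw [c1, c2, cnt]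

/-! ### scaling and partition -/

theorem block_one_iff (m : ℕ) (W : Matrix (Fin 1 ⊕ Fin m) (Fin 1 ⊕ Fin m) F) :
    W.toBlocks₁₁ = 1 ↔ W (Sum.inl 0) (Sum.inl 0) = 1 := by
  constructor
  · intro h
    have := congrFun (congrFun h 0) 0
    simpa [toBlocks₁₁] using this
  · intro h
    ext i j
    have hi : i = 0 := Subsingleton.elim _ _
    have hj : j = 0 := Subsingleton.elim _ _
    subst hi; subst hj
    simpa [toBlocks₁₁] using h

theorem card_entry_one' {m : ℕ} (r : ℕ) (hr : 1 ≤ r) (i0 : Fin (m+1)) (h0 : (i0 : ℕ) = 0) :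
    Nat.card {X : Matrix (Fin (m+1)) (Fin (m+1)) F // X.rank = r ∧ X i0 i0 = 1}
      = Fintype.card F ^ m * (Fintype.card F ^ m * cnt F m m (r-1)) := by
  classical
  set e : Fin (m+1) ≃ Fin 1 ⊕ Fin m :=
    (finCongr (by omega : m + 1 = 1 + m)).trans finSumFinEquiv.symm with hedef
  have he : e.symm (Sum.inl 0) = i0 := by
    apply Fin.ext
    rw [h0]
    rfl
  have E : {X : Matrix (Fin (m+1)) (Fin (m+1)) F // X.rank = r ∧ X i0 i0 = 1}
      ≃ {W : Matrix (Fin 1 ⊕ Fin m) (Fin 1 ⊕ Fin m) F // W.rank = r ∧ W.toBlocks₁₁ = 1} := by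
    refine Equiv.subtypeEquiv (Matrix.reindex e e) fun X => ?_
    rw [block_one_iff]
    constructor
    · rintro ⟨h1, h2⟩
      refine ⟨?_, ?_⟩
      · rw [← h1]; exact Matrix.rank_reindex e e X
      · simpa [Matrix.reindex_apply, Matrix.submatrix_apply, he] using h2
    · rintro ⟨h1, h2⟩
      refine ⟨?_, ?_⟩
      · rw [← h1, Matrix.rank_reindex]
      · simpa [Matrix.reindex_apply, Matrix.submatrix_apply, he] using h2
  rw [Nat.card_congr E, card_entry_one r hr]

def scaleEquiv {n : ℕ} (i0 : Fin n) (a : F) (ha : a ≠ 0) (r : ℕ) :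
    {X : Matrix (Fin n) (Fin n) F // X.rank = r ∧ X i0 i0 = 1} ≃
    {X : Matrix (Fin n) (Fin n) F // X.rank = r ∧ X i0 i0 = a} := by
  classical
  have hdet : ∀ b : F, b ≠ 0 → IsUnit (Matrix.det (diagonal fun i => if i = i0 then b else 1)) := by
    intro b hb
    rw [det_diagonal]
    refine (Finset.prod_ne_zero_iff.mpr fun i _ => ?_).isUnit
    split <;> simp [hb]
  refine ⟨fun X => ⟨diagonal (fun i => if i = i0 then a else 1) * X.1, ?_, ?_⟩,
          fun Y => ⟨diagonal (fun i => if i = i0 then a⁻¹ else 1) * Y.1, ?_, ?_⟩, ?_, ?_⟩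
  · rw [Matrix.rank_mul_eq_right_of_isUnit_det _ _ (hdet a ha)]; exact X.2.1
  · rw [Matrix.diagonal_mul]; simp [X.2.2]
  · rw [Matrix.rank_mul_eq_right_of_isUnit_det _ _ (hdet a⁻¹ (inv_ne_zero ha))]; exact Y.2.1
  · rw [Matrix.diagonal_mul]; simp [Y.2.2, inv_mul_cancel₀ ha]
  · intro X
    apply Subtype.ext
    show diagonal _ * (diagonal _ * X.1) = X.1
    rw [← Matrix.mul_assoc, Matrix.diagonal_mul_diagonal]
    have : (fun i => (if i = i0 then a⁻¹ else 1) * (if i = i0 then a else 1)) = fun _ : Fin n => (1:F) := by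
      funext i; split <;> simp [inv_mul_cancel₀ ha]
    rw [this, Matrix.diagonal_one, Matrix.one_mul]
  · intro Y
    apply Subtype.ext
    show diagonal _ * (diagonal _ * Y.1) = Y.1
    rw [← Matrix.mul_assoc, Matrix.diagonal_mul_diagonal]
    have : (fun i => (if i = i0 then a else 1) * (if i = i0 then a⁻¹ else 1)) = fun _ : Fin n => (1:F) := by
      funext i; split <;> simp [mul_inv_cancel₀ ha]
    rw [this, Matrix.diagonal_one, Matrix.one_mul]

theorem card_rank_split {n : ℕ} (i0 : Fin n) (r : ℕ) :
    cnt F n n r = Nat.card {X : Matrix (Fin n) (Fin n) F // X.rank = r ∧ X i0 i0 = 0}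
      + (Fintype.card F - 1) * Nat.card {X : Matrix (Fin n) (Fin n) F // X.rank = r ∧ X i0 i0 = 1} := by
  classical
  have E : {X : Matrix (Fin n) (Fin n) F // X.rank = r} ≃
      Σ a : F, {X : Matrix (Fin n) (Fin n) F // X.rank = r ∧ X i0 i0 = a} :=
    { toFun := fun X => ⟨X.1 i0 i0, X.1, X.2, rfl⟩
      invFun := fun p => ⟨p.2.1, p.2.2.1⟩
      left_inv := fun X => rfl
      right_inv := fun p => by rcases p with ⟨a, X, hX, rfl⟩; rfl }
  rw [cnt, Nat.card_congr E, Nat.card_eq_fintype_card, Fintype.card_sigma]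
  rw [← Finset.add_sum_erase Finset.univ _ (Finset.mem_univ (0:F))]
  have hconst : ∀ a ∈ Finset.univ.erase (0:F),
      Fintype.card {X : Matrix (Fin n) (Fin n) F // X.rank = r ∧ X i0 i0 = a}
        = Fintype.card {X : Matrix (Fin n) (Fin n) F // X.rank = r ∧ X i0 i0 = 1} := by
    intro a ha
    rw [Finset.mem_erase] at ha
    exact (Fintype.card_congr (scaleEquiv i0 a ha.1 r)).symm
  rw [Finset.sum_congr rfl hconst, Finset.sum_const, Finset.card_erase_of_mem (Finset.mem_univ _),
    Finset.card_univ, smul_eq_mul]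
  rw [Nat.card_eq_fintype_card, Nat.card_eq_fintype_card]

/-- the number of `n × n` matrices of rank `r` over `F_q` with `(1,1)`-entry `0`. -/
theorem stmt2 (F : Type) [Field F] [Fintype F] (q : ℕ) (hq : q = Fintype.card F)
    (n r : ℕ) (hn : 1 ≤ n) (hr : 1 ≤ r) (hrn : r ≤ n) :
    (Nat.card {X : Matrix (Fin n) (Fin n) F // X.rank = r ∧ X ⟨0, hn⟩ ⟨0, hn⟩ = 0} : ℚ) =
      (q : ℚ)⁻¹ * Nat.card {X : Matrix (Fin n) (Fin n) F // X.rank = r} +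
      ((q : ℚ) ^ (r : ℤ) - (q : ℚ) ^ ((r : ℤ) - 1)) *
        Nat.card {X : Matrix (Fin (n - 1)) (Fin (n - 1)) F // X.rank = r} +
      ((q : ℚ) ^ ((r : ℤ) - 2) - (q : ℚ) ^ ((r : ℤ) - 1)) *
        Nat.card {X : Matrix (Fin (n - 1)) (Fin (n - 1)) F // X.rank = r - 1} := by
  subst hq
  obtain ⟨m, rfl⟩ : ∃ m, n = m + 1 := ⟨n - 1, by omega⟩
  obtain ⟨s, rfl⟩ : ∃ s, r = s + 1 := ⟨r - 1, by omega⟩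
  simp only [Nat.add_sub_cancel]
  set Q : ℚ := (Fintype.card F : ℚ) with hQdef
  have hq2 : 1 < Fintype.card F := Fintype.one_lt_card
  have hQ1 : (1:ℚ) < Q := by rw [hQdef]; exact_mod_cast hq2
  have hQ0 : Q ≠ 0 := by positivity
  set i0 : Fin (m+1) := ⟨0, hn⟩ with hi0
  have hone := card_entry_one' (F := F) (s+1) (by omega) i0 rfl
  have hsplit := card_rank_split (F := F) i0 (s+1)
  rw [hone] at hsplit
  simp only [Nat.add_sub_cancel] at hsplit
  set A0 : ℕ := Nat.card {X : Matrix (Fin (m+1)) (Fin (m+1)) F // X.rank = s+1 ∧ X i0 i0 = 0}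
    with hA0def
  have d1 : Nat.card {X : Matrix (Fin (m+1)) (Fin (m+1)) F // X.rank = s+1}
      = cnt F (m+1) (m+1) (s+1) := rfl
  have d2 : Nat.card {X : Matrix (Fin (m+1-1)) (Fin (m+1-1)) F // X.rank = s+1}
      = cnt F m m (s+1) := rfl
  have d3 : Nat.card {X : Matrix (Fin (m+1-1)) (Fin (m+1-1)) F // X.rank = s}
      = cnt F m m s := rfl
  rw [d1, d2, d3]
  -- cast the split to ℚ
  have hcast : (A0 : ℚ) = (cnt F (m+1) (m+1) (s+1) : ℚ)
      - (Q - 1) * (Q^m * (Q^m * (cnt F m m s : ℚ))) := by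
    have h1 := congrArg (fun t : ℕ => (t : ℚ)) hsplit
    push_cast [Nat.cast_sub (le_of_lt hq2)] at h1
    rw [hQdef]
    linarith [h1]
  rw [hcast]
  -- integer power rewrites
  have e0 : (Q : ℚ) ^ (((s+1:ℕ)):ℤ) = Q^(s+1) := zpow_natCast _ _
  have e1 : (((s+1:ℕ)):ℤ) - 1 = ((s:ℕ):ℤ) := by push_cast; ring
  have e2 : (((s+1:ℕ)):ℤ) - 2 = ((s:ℕ):ℤ) - 1 := by push_cast; ring
  rw [e0, e1, e2, zpow_natCast, zpow_sub₀ hQ0, zpow_natCast, zpow_one]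
  -- closed forms
  rw [cnt_closed (m+1) (m+1) (s+1), cnt_closed m m (s+1), cnt_closed m m s]
  rw [← hQdef]
  rw [Aq_pascal, Cq_succ, Aq_succ Q m s]
  have hC := Cq_ne_zero hQ1 s
  have hE := Aq_pos_ne_zero_factor hQ1 s
  field_simp
  ring
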